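/- Let γ_A, γ_P > 0 and define V(t,x) = -exp(-γ_P (x + c(T-t))) where c = (1/2)·(1+γ_P)²/(1+γ_A+γ_P) - γ_P/2. Then V solves the HJB equation V_t + sup_{Z∈ℝ} { V_x (Z - (1+γ_A)/2 · Z²) + (1/2) V_xx (1-Z)² } = 0 for all t ∈ [0,T] and x ∈ ℝ, with terminal condition V(T,x) = -exp(-γ_P x). -/

import Mathlib

/-- Holmström–Milgrom: the explicit exponential candidate solves the HJB equation. -/
theorem hm_explicit_solution (T γA γP c : ℝ) (hA : 0 < γA) (hP : 0 < γP) (hT : 0 < T)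
    (hc : c = (1/2) * (1+γP)^2 / (1+γA+γP) - γP/2)
    (V : ℝ → ℝ → ℝ)
    (hV : ∀ t x, V t x = -Real.exp (-γP * (x + c * (T - t)))) :
    (∀ t ∈ Set.Icc (0:ℝ) T, ∀ x : ℝ,
      deriv (fun s => V s x) t
        + sSup {y : ℝ | ∃ Z : ℝ,
            y = deriv (fun z => V t z) x * (Z - (1+γA)/2 * Z^2)
              + (1/2) * deriv (deriv (fun z => V t z)) x * (1-Z)^2} = 0)
    ∧ (∀ x : ℝ, V T x = -Real.exp (-γP * x)) := by
  have hD : (0:ℝ) < 1 + γA + γP := by linarith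
  -- time derivative
  have hd1 : ∀ t x : ℝ, deriv (fun s => V s x) t
      = -(γP * c) * Real.exp (-γP * (x + c * (T - t))) := by
    intro t x
    have heq : (fun s => V s x) = fun s => -Real.exp (γP * c * s + (-γP * (x + c * T))) := by
      funext s; rw [hV]; ring_nf
    rw [heq]
    have hlin : HasDerivAt (fun s : ℝ => γP * c * s + (-γP * (x + c * T))) (γP * c) t := by
      simpa using ((hasDerivAt_id t).const_mul (γP * c)).add_const (-γP * (x + c * T))
    have : HasDerivAt (fun s => -Real.exp (γP * c * s + (-γP * (x + c * T))))
        (-(Real.exp (γP * c * t + -γP * (x + c * T)) * (γP * c))) t := (hlin.exp).neg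
    rw [this.deriv]; ring_nf
  -- first space derivative
  have hd2 : ∀ t : ℝ, deriv (fun z => V t z)
      = fun x => γP * Real.exp (-γP * (x + c * (T - t))) := by
    intro t
    funext x
    have heq : (fun z => V t z) = fun z => -Real.exp ((-γP) * z + (-γP * (c * (T - t)))) := by
      funext z; rw [hV]; ring_nf
    rw [heq]
    have hlin : HasDerivAt (fun z : ℝ => (-γP) * z + (-γP * (c * (T - t)))) (-γP) x := by
      simpa using ((hasDerivAt_id x).const_mul (-γP)).add_const (-γP * (c * (T - t)))
    have : HasDerivAt (fun z => -Real.exp ((-γP) * z + (-γP * (c * (T - t)))))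
        (-(Real.exp ((-γP) * x + (-γP * (c * (T - t)))) * (-γP))) x := (hlin.exp).neg
    rw [this.deriv]; ring_nf
  -- second space derivative
  have hd3 : ∀ t x : ℝ, deriv (deriv (fun z => V t z)) x
      = -(γP ^ 2) * Real.exp (-γP * (x + c * (T - t))) := by
    intro t x
    rw [hd2 t]
    have heq : (fun x => γP * Real.exp (-γP * (x + c * (T - t))))
        = fun z => γP * Real.exp ((-γP) * z + (-γP * (c * (T - t)))) := by
      funext z; ring_nf
    rw [heq]
    have hlin : HasDerivAt (fun z : ℝ => (-γP) * z + (-γP * (c * (T - t)))) (-γP) x := by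
      simpa using ((hasDerivAt_id x).const_mul (-γP)).add_const (-γP * (c * (T - t)))
    have := (hlin.exp).const_mul γP
    rw [this.deriv]; ring_nf
  refine ⟨?_, fun x => by rw [hV]; ring_nf⟩
  intro t ht x
  set E := Real.exp (-γP * (x + c * (T - t))) with hE
  have hEpos : 0 < E := Real.exp_pos _
  have hc' : c * (1 + γA + γP) = (1 + γP) ^ 2 / 2 - γP / 2 * (1 + γA + γP) := by
    rw [hc]; field_simp
  -- the supremum
  have hSup : sSup {y : ℝ | ∃ Z : ℝ,
      y = deriv (fun z => V t z) x * (Z - (1+γA)/2 * Z^2)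
        + (1/2) * deriv (deriv (fun z => V t z)) x * (1-Z)^2} = γP * c * E := by
    have hset : {y : ℝ | ∃ Z : ℝ,
        y = deriv (fun z => V t z) x * (Z - (1+γA)/2 * Z^2)
          + (1/2) * deriv (deriv (fun z => V t z)) x * (1-Z)^2}
        = {y : ℝ | ∃ Z : ℝ,
        y = (γP * E) * (Z - (1+γA)/2 * Z^2) + (1/2) * (-(γP^2) * E) * (1-Z)^2} := by
      have hd3' : deriv (fun x => γP * Real.exp (-γP * (x + c * (T - t)))) x
          = -(γP^2) * E := by rw [← hd2 t, hd3 t x, hE]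
      simp only [hd2 t, hd3', ← hE]
    rw [hset]
    apply IsGreatest.csSup_eq
    constructor
    · refine ⟨(1 + γP) / (1 + γA + γP), ?_⟩
      have key : γP * c = γP * ((1 + γP) / (1 + γA + γP)
          - (1+γA)/2 * ((1 + γP) / (1 + γA + γP))^2)
          - γP^2/2 * (1 - (1 + γP) / (1 + γA + γP))^2 := by
        rw [hc]; field_simp; ring
      calc γP * c * E = (γP * ((1 + γP) / (1 + γA + γP)
          - (1+γA)/2 * ((1 + γP) / (1 + γA + γP))^2)
          - γP^2/2 * (1 - (1 + γP) / (1 + γA + γP))^2) * E := by rw [← key]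
        _ = (γP * E) * ((1 + γP) / (1 + γA + γP)
              - (1+γA)/2 * ((1 + γP) / (1 + γA + γP))^2)
            + (1/2) * (-(γP^2) * E) * (1 - (1 + γP) / (1 + γA + γP))^2 := by ring
    · rintro y ⟨Z, rfl⟩
      have hg : γP * (Z - (1+γA)/2 * Z^2) - γP^2/2 * (1-Z)^2 ≤ γP * c := by
        nlinarith [mul_nonneg hP.le (sq_nonneg ((1 + γA + γP) * Z - (1 + γP))),
          sq_nonneg ((1 + γA + γP) * Z - (1 + γP)), hc', hD, hP]
      calc (γP * E) * (Z - (1+γA)/2 * Z^2) + (1/2) * (-(γP^2) * E) * (1-Z)^2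
          = (γP * (Z - (1+γA)/2 * Z^2) - γP^2/2 * (1-Z)^2) * E := by ring
        _ ≤ (γP * c) * E := by
            exact mul_le_mul_of_nonneg_right hg hEpos.le
        _ = γP * c * E := by ring
  rw [hd1 t x, hSup]; ring
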